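/- arXiv:2410.06082 — 3 statements merged into one kernel-verified Lean document; each statement's English description precedes it below -/
import Mathlib

section
/- For any integer q ≥ 3, any real 1/2 ≤ σ ≤ 2, and any completely multiplicative function χ with |χ(p)| ≤ 1, one has |∏_{p ∣ q} (1 - χ(p) p^{-σ-it})| ≤ exp((log q)^{(2-σ)/2}) for all real t. -/
open Finset in
private lemma tele_aux (S : Finset ℕ) (hS : ∀ k ∈ S, 2 ≤ k) :
    ∑ k ∈ S, ((k : ℝ) * ((k : ℝ) + 1))⁻¹ ≤ 1 / 2 := by
  classical
  set N : ℕ := S.sup id + 1 with hN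
  have hsub : S ⊆ Finset.Ico 2 N := by
    intro k hk
    exact Finset.mem_Ico.mpr ⟨hS k hk, Nat.lt_succ_of_le (Finset.le_sup (f := id) hk)⟩
  have hnonneg : ∀ k ∈ Finset.Ico 2 N, 0 ≤ ((k : ℝ) * ((k : ℝ) + 1))⁻¹ := by
    intro k hk
    have : (2:ℝ) ≤ (k:ℝ) := by exact_mod_cast (Finset.mem_Ico.mp hk).1
    positivity
  refine le_trans (Finset.sum_le_sum_of_subset_of_nonneg hsub (fun k hk _ => hnonneg k hk)) ?_
  have htel : ∀ M : ℕ, ∑ k ∈ Finset.Ico 2 (M + 2), ((k : ℝ) * ((k : ℝ) + 1))⁻¹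
      = 1 / 2 - ((M + 2 : ℕ) : ℝ)⁻¹ := by
    intro M
    induction M with
    | zero => norm_num
    | succ m ih =>
      rw [show m + 1 + 2 = (m + 2) + 1 by ring, Finset.sum_Ico_succ_top (by omega), ih]
      have h1 : ((m + 2 : ℕ) : ℝ) ≠ 0 := by positivity
      have h2 : ((m + 2 : ℕ) : ℝ) + 1 ≠ 0 := by positivity
      have h3 : ((m + 1 + 2 : ℕ) : ℝ) = ((m + 2 : ℕ) : ℝ) + 1 := by push_cast; ring
      rw [h3]
      field_simp
      ring
  have key : ∀ M : ℕ, ∑ k ∈ Finset.Ico 2 (M + 2), ((k : ℝ) * ((k : ℝ) + 1))⁻¹ ≤ 1 / 2 := by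
    intro M
    rw [htel M]
    have : (0:ℝ) < ((M + 2 : ℕ) : ℝ) := by positivity
    have := inv_pos.mpr this
    linarith
  obtain ⟨M, hM⟩ : ∃ M, N = M + 2 ∨ N ≤ 2 := ⟨N - 2, by omega⟩
  rcases hM with h | h
  · rw [h]; exact key M
  · rw [Finset.Ico_eq_empty (by omega)]; norm_num

private lemma log_three_ge_one : (1:ℝ) ≤ Real.log 3 := by
  rw [Real.le_log_iff_exp_le (by norm_num)]
  have := Real.exp_one_lt_d9
  linarith

open Finset in
private lemma key_sum (S : Finset ℕ) (hS : ∀ p ∈ S, p.Prime) (e : ℝ) (he0 : 0 ≤ e)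
    (he3 : e ≤ 3) :
    ∑ p ∈ S, (p : ℝ) ^ (-2 : ℝ) * Real.log p ^ (-e) ≤ 1 := by
  classical
  set f : ℕ → ℝ := fun p => (p : ℝ) ^ (-2 : ℝ) * Real.log p ^ (-e) with hf
  have hlogpos : ∀ p : ℕ, p.Prime → 0 < Real.log p := by
    intro p hp
    exact Real.log_pos (by exact_mod_cast hp.one_lt)
  have hfnonneg : ∀ p ∈ S, 0 ≤ f p := by
    intro p hp
    have := hlogpos p (hS p hp)
    have hppos : (0:ℝ) < (p:ℝ) := by exact_mod_cast (hS p hp).pos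
    positivity
  -- peel off 2 and 3
  have peel : ∀ (T : Finset ℕ) (a : ℕ), (∀ p ∈ T, 0 ≤ f p) → 0 ≤ f a →
      ∑ p ∈ T, f p ≤ f a + ∑ p ∈ T.erase a, f p := by
    intro T a hT ha
    by_cases h : a ∈ T
    · rw [Finset.add_sum_erase _ _ h]
    · rw [Finset.erase_eq_of_notMem h]
      linarith
  have hf2 : f 2 ≤ 0.7508 := by
    have hlog2pos : (0:ℝ) < Real.log 2 := Real.log_pos (by norm_num)
    have hlog2lt : Real.log 2 ≤ 1 := by
      rw [Real.log_le_iff_le_exp (by norm_num)]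
      have := Real.exp_one_gt_d9
      linarith
    have h1 : Real.log 2 ^ (-e) ≤ Real.log 2 ^ (-3 : ℝ) :=
      Real.rpow_le_rpow_of_exponent_ge hlog2pos hlog2lt (by linarith)
    have h2 : ((2:ℕ):ℝ) ^ (-2:ℝ) = 1/4 := by
      rw [show (-2:ℝ) = -((2:ℕ):ℝ) by norm_num, Real.rpow_neg (by positivity),
        Real.rpow_natCast]
      norm_num
    have h3 : Real.log 2 ^ (-3 : ℝ) = (Real.log 2 ^ (3:ℕ))⁻¹ := by
      rw [show (-3:ℝ) = -((3:ℕ):ℝ) by norm_num, Real.rpow_neg hlog2pos.le,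
        Real.rpow_natCast]
    have hd9 := Real.log_two_gt_d9
    have hcube : (0.6931471803 : ℝ) ^ (3:ℕ) ≤ Real.log 2 ^ (3:ℕ) := by
      apply pow_le_pow_left₀ (by norm_num) hd9.le
    have hcubepos : (0:ℝ) < (0.6931471803 : ℝ) ^ (3:ℕ) := by norm_num
    have h4 : (Real.log 2 ^ (3:ℕ))⁻¹ ≤ ((0.6931471803 : ℝ) ^ (3:ℕ))⁻¹ :=
      inv_anti₀ hcubepos hcube
    have h5 : ((0.6931471803 : ℝ) ^ (3:ℕ))⁻¹ ≤ 3.0032 := by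
      rw [inv_le_comm₀ (by norm_num) (by norm_num)]
      norm_num
    calc f 2 = ((2:ℕ):ℝ) ^ (-2:ℝ) * Real.log 2 ^ (-e) := by rw [hf]; norm_num
    _ ≤ 1/4 * 3.0032 := by
        rw [h2]
        have : Real.log 2 ^ (-e) ≤ 3.0032 := le_trans h1 (by rw [h3]; linarith)
        have hnn : (0:ℝ) ≤ Real.log 2 ^ (-e) := (Real.rpow_pos_of_pos hlog2pos _).le
        nlinarith
    _ ≤ 0.7508 := by norm_num
  have hf3 : f 3 ≤ 1/9 := by
    have h1 : Real.log 3 ^ (-e) ≤ 1 :=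
      Real.rpow_le_one_of_one_le_of_nonpos log_three_ge_one (by linarith)
    have h2 : ((3:ℕ):ℝ) ^ (-2:ℝ) = 1/9 := by
      rw [show (-2:ℝ) = -((2:ℕ):ℝ) by norm_num, Real.rpow_neg (by positivity),
        Real.rpow_natCast]
      norm_num
    have hnn : (0:ℝ) ≤ ((3:ℕ):ℝ) ^ (-2:ℝ) := by positivity
    calc f 3 = ((3:ℕ):ℝ) ^ (-2:ℝ) * Real.log 3 ^ (-e) := by rw [hf]; norm_num
    _ ≤ ((3:ℕ):ℝ) ^ (-2:ℝ) * 1 := by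
        apply mul_le_mul_of_nonneg_left h1 hnn
    _ = 1/9 := by rw [h2]; ring
  -- the rest: primes ≥ 5
  set T : Finset ℕ := (S.erase 2).erase 3 with hT
  have hT5 : ∀ p ∈ T, p.Prime ∧ 5 ≤ p ∧ p % 2 = 1 := by
    intro p hp
    have h3 : p ≠ 3 := Finset.ne_of_mem_erase hp
    have hp' := Finset.mem_of_mem_erase hp
    have h2 : p ≠ 2 := Finset.ne_of_mem_erase hp'
    have hpr : p.Prime := hS p (Finset.mem_of_mem_erase hp')
    have hodd : p % 2 = 1 := by
      rcases hpr.eq_two_or_odd with h | h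
      · omega
      · exact h
    have := hpr.two_le
    exact ⟨hpr, by omega, hodd⟩
  have hTsum : ∑ p ∈ T, f p ≤ 1/8 := by
    have step1 : ∑ p ∈ T, f p ≤ ∑ p ∈ T, (1/4 : ℝ) * (((p / 2 : ℕ) : ℝ) * (((p / 2 : ℕ) : ℝ) + 1))⁻¹ := by
      apply Finset.sum_le_sum
      intro p hp
      obtain ⟨hpr, hp5, hodd⟩ := hT5 p hp
      have hlp1 : (1:ℝ) ≤ Real.log p := by
        calc (1:ℝ) ≤ Real.log 3 := log_three_ge_one
        _ ≤ Real.log p := Real.log_le_log (by norm_num) (by exact_mod_cast (by omega : 3 ≤ p))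
      have h1 : Real.log p ^ (-e) ≤ 1 :=
        Real.rpow_le_one_of_one_le_of_nonpos hlp1 (by linarith)
      have hppos : (0:ℝ) < (p:ℝ) := by positivity
      have h2 : (p:ℝ) ^ (-2:ℝ) = ((p:ℝ) ^ (2:ℕ))⁻¹ := by
        rw [show (-2:ℝ) = -((2:ℕ):ℝ) by norm_num, Real.rpow_neg hppos.le,
          Real.rpow_natCast]
      set k : ℕ := p / 2 with hk
      have hpk : p = 2 * k + 1 := by omega
      have hk2 : 2 ≤ k := by omega
      have hkR : (2:ℝ) ≤ (k:ℝ) := by exact_mod_cast hk2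
      have hbound : 4 * ((k:ℝ) * ((k:ℝ) + 1)) ≤ (p:ℝ) ^ (2:ℕ) := by
        have hcast : (p:ℝ) = 2 * (k:ℝ) + 1 := by exact_mod_cast congrArg (Nat.cast : ℕ → ℝ) hpk
        rw [hcast]
        nlinarith
      have hkpos : (0:ℝ) < (k:ℝ) * ((k:ℝ) + 1) := by nlinarith
      have hfp : f p ≤ ((p:ℝ) ^ (2:ℕ))⁻¹ := by
        rw [hf]
        simp only
        rw [h2]
        have hinv : (0:ℝ) ≤ ((p:ℝ) ^ (2:ℕ))⁻¹ := by positivity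
        calc ((p:ℝ) ^ (2:ℕ))⁻¹ * Real.log p ^ (-e) ≤ ((p:ℝ) ^ (2:ℕ))⁻¹ * 1 :=
          mul_le_mul_of_nonneg_left h1 hinv
        _ = ((p:ℝ) ^ (2:ℕ))⁻¹ := by ring
      refine le_trans hfp ?_
      have h4 : ((p:ℝ) ^ (2:ℕ))⁻¹ ≤ (4 * ((k:ℝ) * ((k:ℝ) + 1)))⁻¹ := by
        apply inv_anti₀ (by positivity)
        exact hbound
      refine le_trans h4 (le_of_eq ?_)
      rw [mul_inv]
      norm_num
    refine le_trans step1 ?_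
    rw [← Finset.mul_sum]
    have himg : ∑ k ∈ T.image (fun p : ℕ => p / 2), ((k : ℝ) * ((k : ℝ) + 1))⁻¹
        = ∑ p ∈ T, (((p / 2 : ℕ) : ℝ) * (((p / 2 : ℕ) : ℝ) + 1))⁻¹ := by
      apply Finset.sum_image
      intro a ha b hb hab
      obtain ⟨_, _, hoa⟩ := hT5 a ha
      obtain ⟨_, _, hob⟩ := hT5 b hb
      simp only at hab
      omega
    rw [← himg]
    have := tele_aux (T.image (fun p : ℕ => p / 2)) (by
      intro k hk
      obtain ⟨p, hp, rfl⟩ := Finset.mem_image.mp hk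
      obtain ⟨_, hp5, _⟩ := hT5 p hp
      omega)
    linarith
  have e1 : ∑ p ∈ S, f p ≤ f 2 + ∑ p ∈ S.erase 2, f p := by
    apply peel S 2 hfnonneg
    by_cases h2 : 2 ∈ S
    · exact hfnonneg 2 h2
    · have : (0:ℝ) < Real.log 2 := Real.log_pos (by norm_num)
      rw [hf]; positivity
  have e2 : ∑ p ∈ S.erase 2, f p ≤ f 3 + ∑ p ∈ T, f p := by
    apply peel _ 3 (fun p hp => hfnonneg p (Finset.mem_of_mem_erase hp))
    have : (0:ℝ) < Real.log 3 := Real.log_pos (by norm_num)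
    rw [hf]; positivity
  calc ∑ p ∈ S, f p ≤ f 2 + (f 3 + ∑ p ∈ T, f p) := by linarith
  _ ≤ 0.7508 + (1/9 + 1/8) := by linarith
  _ ≤ 1 := by norm_num

private lemma sum_log_le (q : ℕ) (hq : 1 ≤ q) :
    ∑ p ∈ q.primeFactors, Real.log p ≤ Real.log q := by
  have hdvd : ∏ p ∈ q.primeFactors, p ∣ q := Nat.prod_primeFactors_dvd q
  have hle : (∏ p ∈ q.primeFactors, p) ≤ q := Nat.le_of_dvd (by omega) hdvd
  have h1 : ∑ p ∈ q.primeFactors, Real.log p = Real.log (∏ p ∈ q.primeFactors, (p:ℝ)) := by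
    rw [Real.log_prod]
    intro p hp
    have := (Nat.prime_of_mem_primeFactors hp).pos
    positivity
  rw [h1]
  have h2 : (∏ p ∈ q.primeFactors, (p:ℝ)) = ((∏ p ∈ q.primeFactors, p : ℕ) : ℝ) := by
    push_cast; ring
  rw [h2]
  apply Real.log_le_log
  · have hpos : 0 < ∏ p ∈ q.primeFactors, p :=
      Finset.prod_pos fun p hp => (Nat.prime_of_mem_primeFactors hp).pos
    exact_mod_cast hpos
  · exact_mod_cast hle

private lemma sum_rpow_le (q : ℕ) (hq : 3 ≤ q) (σ : ℝ) (hσ1 : 1 / 2 ≤ σ) (hσ2 : σ ≤ 2) :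
    ∑ p ∈ q.primeFactors, (p : ℝ) ^ (-σ) ≤ Real.log q ^ ((2 - σ) / 2) := by
  classical
  have hlogq : (1:ℝ) ≤ Real.log q := by
    calc (1:ℝ) ≤ Real.log 3 := log_three_ge_one
    _ ≤ Real.log q := Real.log_le_log (by norm_num) (by exact_mod_cast hq)
  have hprime : ∀ p ∈ q.primeFactors, p.Prime := fun p hp => Nat.prime_of_mem_primeFactors hp
  rcases eq_or_lt_of_le hσ2 with rfl | hσlt
  · -- σ = 2
    have : ∑ p ∈ q.primeFactors, (p : ℝ) ^ (-(2:ℝ)) ≤ 1 := by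
      have := key_sum q.primeFactors hprime 0 le_rfl (by norm_num)
      simp only [neg_zero, Real.rpow_zero, mul_one] at this
      exact this
    calc ∑ p ∈ q.primeFactors, (p : ℝ) ^ (-(2:ℝ)) ≤ 1 := this
    _ = Real.log q ^ ((2 - 2) / 2 : ℝ) := by
        rw [show ((2:ℝ) - 2) / 2 = 0 by norm_num, Real.rpow_zero]
  · -- 1/2 ≤ σ < 2
    have hσpos : (0:ℝ) < σ := by linarith
    have h2σ : (0:ℝ) < 2 - σ := by linarith
    set P : ℝ := 2 / σ with hP
    set Q : ℝ := 2 / (2 - σ) with hQ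
    have hPQ : P.HolderConjugate Q := by
      rw [Real.holderConjugate_iff]
      constructor
      · rw [hP]; rw [lt_div_iff₀ hσpos]; linarith
      · rw [hP, hQ]; field_simp; ring
    set F : ℕ → ℝ := fun p => (p : ℝ) ^ (-σ) * Real.log p ^ (-((2 - σ) / 2)) with hF
    set G : ℕ → ℝ := fun p => Real.log p ^ ((2 - σ) / 2) with hG
    have hFnn : ∀ p ∈ q.primeFactors, 0 ≤ F p := by
      intro p hp
      have hlp : 0 < Real.log p := Real.log_pos (by exact_mod_cast (hprime p hp).one_lt)
      have : (0:ℝ) < p := by exact_mod_cast (hprime p hp).pos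
      rw [hF]; positivity
    have hGnn : ∀ p ∈ q.primeFactors, 0 ≤ G p := by
      intro p hp
      have hlp : 0 < Real.log p := Real.log_pos (by exact_mod_cast (hprime p hp).one_lt)
      rw [hG]; positivity
    have hFG : ∀ p ∈ q.primeFactors, F p * G p = (p : ℝ) ^ (-σ) := by
      intro p hp
      have hlp : 0 < Real.log p := Real.log_pos (by exact_mod_cast (hprime p hp).one_lt)
      rw [hF, hG]
      simp only
      rw [Real.rpow_neg hlp.le]
      have : Real.log p ^ ((2 - σ) / 2) ≠ 0 := (Real.rpow_pos_of_pos hlp _).ne'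
      field_simp
    have holder := Real.inner_le_Lp_mul_Lq (s := q.primeFactors) F G hPQ
    have hsum1 : ∑ p ∈ q.primeFactors, F p * G p = ∑ p ∈ q.primeFactors, (p : ℝ) ^ (-σ) :=
      Finset.sum_congr rfl hFG
    -- bound the F part
    set e' : ℝ := (2 - σ) / σ with he'
    have he'0 : 0 ≤ e' := by rw [he']; positivity
    have he'3 : e' ≤ 3 := by
      rw [he', div_le_iff₀ hσpos]; linarith
    have hFpow : ∀ p ∈ q.primeFactors,
        |F p| ^ P = (p : ℝ) ^ (-2:ℝ) * Real.log p ^ (-e') := by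
      intro p hp
      have hlp : 0 < Real.log p := Real.log_pos (by exact_mod_cast (hprime p hp).one_lt)
      have hppos : (0:ℝ) < p := by exact_mod_cast (hprime p hp).pos
      rw [abs_of_nonneg (hFnn p hp), hF]
      simp only
      rw [Real.mul_rpow (by positivity) (by positivity), ← Real.rpow_mul hppos.le,
        ← Real.rpow_mul hlp.le]
      have e1 : -σ * P = -2 := by rw [hP]; field_simp [hσpos.ne']
      have e2 : -((2 - σ) / 2) * P = -e' := by
        rw [hP, he']; field_simp [hσpos.ne']
      rw [e1, e2]
    have hGpow : ∀ p ∈ q.primeFactors, |G p| ^ Q = Real.log p := by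
      intro p hp
      have hlp : 0 < Real.log p := Real.log_pos (by exact_mod_cast (hprime p hp).one_lt)
      rw [abs_of_nonneg (hGnn p hp), hG]
      simp only
      rw [← Real.rpow_mul hlp.le]
      have e3 : (2 - σ) / 2 * Q = 1 := by rw [hQ]; field_simp [h2σ.ne']
      rw [e3, Real.rpow_one]
    have hFbnd : (∑ p ∈ q.primeFactors, |F p| ^ P) ^ (1 / P) ≤ 1 := by
      have hsum : ∑ p ∈ q.primeFactors, |F p| ^ P ≤ 1 := by
        rw [Finset.sum_congr rfl hFpow]
        exact key_sum q.primeFactors hprime e' he'0 he'3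
      have hnn : 0 ≤ ∑ p ∈ q.primeFactors, |F p| ^ P :=
        Finset.sum_nonneg fun p _ => Real.rpow_nonneg (abs_nonneg _) _
      exact Real.rpow_le_one hnn hsum (by positivity)
    have hGbnd : (∑ p ∈ q.primeFactors, |G p| ^ Q) ^ (1 / Q) ≤ Real.log q ^ ((2 - σ) / 2) := by
      have hsum : ∑ p ∈ q.primeFactors, |G p| ^ Q ≤ Real.log q := by
        rw [Finset.sum_congr rfl hGpow]
        exact sum_log_le q (by omega)
      have hnn : 0 ≤ ∑ p ∈ q.primeFactors, |G p| ^ Q :=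
        Finset.sum_nonneg fun p _ => Real.rpow_nonneg (abs_nonneg _) _
      have h1Q : 1 / Q = (2 - σ) / 2 := by rw [hQ]; field_simp
      rw [← h1Q]
      exact Real.rpow_le_rpow hnn hsum (by positivity)
    have hGnn' : 0 ≤ (∑ p ∈ q.primeFactors, |G p| ^ Q) ^ (1 / Q) :=
      Real.rpow_nonneg (Finset.sum_nonneg fun p _ => Real.rpow_nonneg (abs_nonneg _) _) _
    calc ∑ p ∈ q.primeFactors, (p : ℝ) ^ (-σ)
        = ∑ p ∈ q.primeFactors, F p * G p := hsum1.symm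
      _ ≤ (∑ p ∈ q.primeFactors, |F p| ^ P) ^ (1 / P) *
          (∑ p ∈ q.primeFactors, |G p| ^ Q) ^ (1 / Q) := holder
      _ ≤ 1 * Real.log q ^ ((2 - σ) / 2) := mul_le_mul hFbnd hGbnd hGnn' (by norm_num)
      _ = Real.log q ^ ((2 - σ) / 2) := one_mul _

open Complex in
/-- For any integer `q ≥ 3`, real `1/2 ≤ σ ≤ 2`, and completely multiplicative `χ`
with `|χ(p)| ≤ 1`, one has
`|∏_{p ∣ q} (1 - χ(p) p^{-σ-it})| ≤ exp((log q)^{(2-σ)/2})` for all real `t`. -/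
theorem stmt_2 (q : ℕ) (hq : 3 ≤ q) (σ : ℝ) (hσ1 : 1 / 2 ≤ σ) (hσ2 : σ ≤ 2)
    (χ : ℕ → ℂ) (hone : χ 1 = 1) (hmul : ∀ m n : ℕ, χ (m * n) = χ m * χ n)
    (hbd : ∀ p : ℕ, p.Prime → ‖χ p‖ ≤ 1) (t : ℝ) :
    ‖∏ p ∈ q.primeFactors, (1 - χ p * (p : ℂ) ^ (-(↑σ + ↑t * I)))‖ ≤
      Real.exp ((Real.log q) ^ ((2 - σ) / 2)) := by
  have hterm : ∀ p ∈ q.primeFactors,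
      ‖1 - χ p * (p : ℂ) ^ (-(↑σ + ↑t * I))‖ ≤ 1 + (p : ℝ) ^ (-σ) := by
    intro p hp
    have hpr := Nat.prime_of_mem_primeFactors hp
    have hppos : 0 < p := hpr.pos
    have hnorm : ‖(p : ℂ) ^ (-(↑σ + ↑t * I))‖ = (p : ℝ) ^ (-σ) := by
      rw [Complex.norm_natCast_cpow_of_pos hppos]
      congr 1
      simp
    calc ‖1 - χ p * (p : ℂ) ^ (-(↑σ + ↑t * I))‖
        ≤ ‖(1 : ℂ)‖ + ‖χ p * (p : ℂ) ^ (-(↑σ + ↑t * I))‖ := norm_sub_le _ _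
      _ = 1 + ‖χ p‖ * ‖(p : ℂ) ^ (-(↑σ + ↑t * I))‖ := by rw [norm_one, norm_mul]
      _ ≤ 1 + 1 * (p : ℝ) ^ (-σ) := by
          rw [hnorm]
          have hnn : (0:ℝ) ≤ (p : ℝ) ^ (-σ) := Real.rpow_nonneg (by positivity) _
          nlinarith [hbd p hpr, norm_nonneg (χ p), Real.rpow_nonneg
            (show (0:ℝ) ≤ (p:ℝ) by positivity) (-σ)]
      _ = 1 + (p : ℝ) ^ (-σ) := by ring
  calc ‖∏ p ∈ q.primeFactors, (1 - χ p * (p : ℂ) ^ (-(↑σ + ↑t * I)))‖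
      = ∏ p ∈ q.primeFactors, ‖1 - χ p * (p : ℂ) ^ (-(↑σ + ↑t * I))‖ := norm_prod _ _
    _ ≤ ∏ p ∈ q.primeFactors, (1 + (p : ℝ) ^ (-σ)) :=
        Finset.prod_le_prod (fun p _ => norm_nonneg _) hterm
    _ ≤ ∏ p ∈ q.primeFactors, Real.exp ((p : ℝ) ^ (-σ)) := by
        apply Finset.prod_le_prod
        · intro p hp
          have : (0:ℝ) ≤ (p : ℝ) ^ (-σ) := Real.rpow_nonneg (by positivity) _
          linarith
        · intro p _
          have := Real.add_one_le_exp ((p : ℝ) ^ (-σ))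
          linarith
    _ = Real.exp (∑ p ∈ q.primeFactors, (p : ℝ) ^ (-σ)) := (Real.exp_sum _ _).symm
    _ ≤ Real.exp ((Real.log q) ^ ((2 - σ) / 2)) :=
        Real.exp_le_exp.mpr (sum_rpow_le q hq σ hσ1 hσ2)
end

section
/- For any integer q ≥ 3 and any real 1/2 ≤ σ ≤ 2, one has ∑_{p ∣ q} p^{-σ} ≤ (log q)^{(2-σ)/2}, where the sum runs over primes dividing q. -/
open Finset Real

lemma tele (T : Finset ℕ) (hT : ∀ k ∈ T, 2 ≤ k) :
    ∑ k ∈ T, ((k : ℝ)⁻¹ - ((k : ℝ) + 1)⁻¹) ≤ 1 / 2 := by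
  set m := T.sup id with hm
  set S : Finset ℕ := (Finset.range m).image (fun i => i + 2) with hS
  have hsub : T ⊆ S := by
    intro k hk
    simp only [hS, Finset.mem_image, Finset.mem_range]
    have h2 := hT k hk
    have hle : k ≤ m := Finset.le_sup (f := id) hk
    exact ⟨k - 2, by omega, by omega⟩
  calc ∑ k ∈ T, ((k : ℝ)⁻¹ - ((k : ℝ) + 1)⁻¹)
      ≤ ∑ k ∈ S, ((k : ℝ)⁻¹ - ((k : ℝ) + 1)⁻¹) := by
        apply Finset.sum_le_sum_of_subset_of_nonneg hsub
        intro k hk _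
        have h2 : 2 ≤ k := by
          simp only [hS, Finset.mem_image] at hk
          obtain ⟨i, _, rfl⟩ := hk; omega
        have h0 : (0:ℝ) < (k:ℝ) := by exact_mod_cast (by omega : 0 < k)
        rw [sub_nonneg]
        exact inv_anti₀ h0 (by linarith)
    _ = ∑ i ∈ Finset.range m, ((((i:ℕ)+2 : ℕ) : ℝ)⁻¹ - ((((i:ℕ)+2 : ℕ) : ℝ) + 1)⁻¹) := by
        rw [hS, Finset.sum_image (by intro a _ b _ h; simp only at h; omega)]
    _ = (((0:ℕ)+2 : ℝ))⁻¹ - ((m:ℝ) + 2)⁻¹ := by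
        have := Finset.sum_range_sub' (fun i => ((i:ℝ) + 2)⁻¹) m
        rw [← this]
        apply Finset.sum_congr rfl
        intro i _
        push_cast
        ring_nf
    _ ≤ 1 / 2 := by
        have : (0:ℝ) ≤ ((m:ℝ) + 2)⁻¹ := by positivity
        norm_num
        linarith

-- sum of 1/p^2 over a finset of odd numbers ≥ 5 is at most 1/8
lemma oddsum (s : Finset ℕ) (hs : ∀ p ∈ s, 5 ≤ p ∧ p % 2 = 1) :
    ∑ p ∈ s, (((p:ℝ))^(2:ℕ))⁻¹ ≤ 1 / 8 := by
  have step1 : ∑ p ∈ s, (((p:ℝ))^(2:ℕ))⁻¹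
      ≤ ∑ p ∈ s, (1/4) * (((p/2 : ℕ) : ℝ)⁻¹ - (((p/2 : ℕ) : ℝ) + 1)⁻¹) := by
    apply Finset.sum_le_sum
    intro p hp
    obtain ⟨h5, hodd⟩ := hs p hp
    set k := p / 2 with hk
    have hpk : p = 2 * k + 1 := by omega
    have hk2 : 2 ≤ k := by omega
    have hkr : (2:ℝ) ≤ (k:ℝ) := by exact_mod_cast hk2
    have hpr : (p:ℝ) = 2 * (k:ℝ) + 1 := by rw [hpk]; push_cast; ring
    rw [hpr]
    have h1 : ((2 * (k:ℝ) + 1)^(2:ℕ))⁻¹ ≤ (4 * (k:ℝ) * ((k:ℝ)+1))⁻¹ := by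
      apply inv_anti₀ (by nlinarith)
      nlinarith
    have h2 : (4 * (k:ℝ) * ((k:ℝ)+1))⁻¹ = (1/4) * ((k:ℝ)⁻¹ - ((k:ℝ) + 1)⁻¹) := by
      field_simp
      ring
    linarith
  have inj : ∀ a ∈ s, ∀ b ∈ s, a / 2 = b / 2 → a = b := by
    intro a ha b hb h
    obtain ⟨_, ha2⟩ := hs a ha
    obtain ⟨_, hb2⟩ := hs b hb
    omega
  have step2 : ∑ p ∈ s, (((p/2 : ℕ) : ℝ)⁻¹ - (((p/2 : ℕ) : ℝ) + 1)⁻¹)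
      = ∑ k ∈ s.image (fun p : ℕ => p / 2), ((k : ℝ)⁻¹ - ((k : ℝ) + 1)⁻¹) := by
    rw [Finset.sum_image inj]
  have step3 : ∑ k ∈ s.image (fun p : ℕ => p / 2), ((k : ℝ)⁻¹ - ((k : ℝ) + 1)⁻¹) ≤ 1/2 := by
    apply tele
    intro k hk
    simp only [Finset.mem_image] at hk
    obtain ⟨p, hp, rfl⟩ := hk
    have := (hs p hp).1
    omega
  calc ∑ p ∈ s, (((p:ℝ))^(2:ℕ))⁻¹ ≤ _ := step1
    _ = (1/4) * ∑ p ∈ s, (((p/2 : ℕ) : ℝ)⁻¹ - (((p/2 : ℕ) : ℝ) + 1)⁻¹) := by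
        rw [Finset.mul_sum]
    _ ≤ (1/4) * (1/2) := by rw [step2]; linarith [step3]
    _ = 1/8 := by norm_num

-- sum of 1/p^2 over a finset of odd primes is at most 1/9 + 1/8
lemma oddprimesum (s : Finset ℕ) (hs : ∀ p ∈ s, Nat.Prime p ∧ p ≠ 2) :
    ∑ p ∈ s, (((p:ℝ))^(2:ℕ))⁻¹ ≤ 1/9 + 1/8 := by
  have hrest : ∀ (u : Finset ℕ), (∀ p ∈ u, Nat.Prime p ∧ p ≠ 2 ∧ p ≠ 3) →
      ∑ p ∈ u, (((p:ℝ))^(2:ℕ))⁻¹ ≤ 1/8 := by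
    intro u hu
    apply oddsum
    intro p hp
    obtain ⟨hprime, h2, h3⟩ := hu p hp
    have h2' := hprime.two_le
    have hodd : p % 2 = 1 := by
      have hnd : ¬ (2 ∣ p) := fun hd =>
        h2 ((Nat.prime_dvd_prime_iff_eq Nat.prime_two hprime).mp hd).symm
      omega
    refine ⟨?_, hodd⟩
    rcases Nat.lt_or_ge p 5 with h | h
    · interval_cases p <;> simp_all
    · exact h
  by_cases h3 : 3 ∈ s
  · rw [← Finset.sum_erase_add s _ h3]
    have h1 : ∑ p ∈ s.erase 3, (((p:ℝ))^(2:ℕ))⁻¹ ≤ 1/8 := by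
      apply hrest
      intro p hp
      have hps := Finset.mem_of_mem_erase hp
      exact ⟨(hs p hps).1, (hs p hps).2, Finset.ne_of_mem_erase hp⟩
    have : (((3:ℕ):ℝ)^(2:ℕ))⁻¹ = 1/9 := by norm_num
    rw [this]
    linarith
  · have h1 : ∑ p ∈ s, (((p:ℝ))^(2:ℕ))⁻¹ ≤ 1/8 := by
      apply hrest
      intro p hp
      exact ⟨(hs p hp).1, (hs p hp).2, fun h => h3 (h ▸ hp)⟩
    linarith

-- core lemma: for t ∈ [0,3], ∑_{p ∈ s prime} p^{-2} (log p)^{-t} ≤ 1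
lemma corelem (s : Finset ℕ) (hs : ∀ p ∈ s, Nat.Prime p) (t : ℝ)
    (ht0 : 0 ≤ t) (ht3 : t ≤ 3) :
    ∑ p ∈ s, (p:ℝ) ^ (-2 : ℝ) * Real.log p ^ (-t) ≤ 1 := by
  have hoddbound : ∀ (u : Finset ℕ), (∀ p ∈ u, Nat.Prime p ∧ p ≠ 2) →
      ∑ p ∈ u, (p:ℝ) ^ (-2 : ℝ) * Real.log p ^ (-t) ≤ 1/9 + 1/8 := by
    intro u hu
    have h1 : ∑ p ∈ u, (p:ℝ) ^ (-2 : ℝ) * Real.log p ^ (-t)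
        ≤ ∑ p ∈ u, (((p:ℝ))^(2:ℕ))⁻¹ := by
      apply Finset.sum_le_sum
      intro p hp
      obtain ⟨hprime, h2⟩ := hu p hp
      have hp3 : 3 ≤ p := by
        have := hprime.two_le; omega
      have hp3r : (3:ℝ) ≤ (p:ℝ) := by exact_mod_cast hp3
      have hpp : (0:ℝ) < (p:ℝ) := by linarith
      have hlog1 : 1 ≤ Real.log p := by
        rw [show (1:ℝ) = Real.log (Real.exp 1) by rw [Real.log_exp]]
        apply Real.log_le_log (Real.exp_pos 1)
        have := Real.exp_one_lt_d9
        linarith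
      have hr1 : Real.log p ^ (-t) ≤ 1 :=
        Real.rpow_le_one_of_one_le_of_nonpos hlog1 (by linarith)
      have hr2 : (p:ℝ) ^ (-2 : ℝ) = (((p:ℝ))^(2:ℕ))⁻¹ := by
        rw [← Real.rpow_natCast (p:ℝ) 2, ← Real.rpow_neg (le_of_lt hpp)]
        norm_num
      calc (p:ℝ) ^ (-2 : ℝ) * Real.log p ^ (-t)
          ≤ (p:ℝ) ^ (-2 : ℝ) * 1 := by
            apply mul_le_mul_of_nonneg_left hr1 (Real.rpow_nonneg (le_of_lt hpp) _)
        _ = (((p:ℝ))^(2:ℕ))⁻¹ := by rw [mul_one, hr2]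
    exact le_trans h1 (oddprimesum u hu)
  have h2term : ((2:ℕ):ℝ) ^ (-2 : ℝ) * Real.log ((2:ℕ):ℝ) ^ (-t)
      ≤ (1/4) * (Real.log 2 ^ (3:ℕ))⁻¹ := by
    have hl2 : (0:ℝ) < Real.log 2 := Real.log_pos (by norm_num)
    have hl2' : Real.log 2 ≤ 1 := by
      have := Real.log_two_lt_d9; linarith
    have e1 : ((2:ℕ):ℝ) ^ (-2 : ℝ) = 1/4 := by
      norm_num
    have e2 : Real.log ((2:ℕ):ℝ) ^ (-t) ≤ Real.log 2 ^ (-(3:ℝ)) := by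
      rw [show ((2:ℕ):ℝ) = (2:ℝ) by norm_num]
      exact Real.rpow_le_rpow_of_exponent_ge hl2 hl2' (by linarith)
    have e3 : Real.log 2 ^ (-(3:ℝ)) = (Real.log 2 ^ (3:ℕ))⁻¹ := by
      rw [show (-(3:ℝ)) = ((-3 : ℤ) : ℝ) by norm_num, Real.rpow_intCast, zpow_neg]
      norm_cast
    rw [e1]
    rw [e3] at e2
    have : (0:ℝ) ≤ Real.log ((2:ℕ):ℝ) ^ (-t) := Real.rpow_nonneg (by
      norm_num; exact le_of_lt hl2) _
    nlinarith
  have hnum : (1/4) * (Real.log 2 ^ (3:ℕ))⁻¹ + (1/9 + 1/8) ≤ 1 := by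
    have h1 := Real.log_two_gt_d9
    have h2 : (0:ℝ) < Real.log 2 := Real.log_pos (by norm_num)
    have h3 : (0.6931471803:ℝ)^(3:ℕ) ≤ Real.log 2 ^ (3:ℕ) := by
      apply pow_le_pow_left₀ (by norm_num) (le_of_lt h1)
    have h4 : (0:ℝ) < Real.log 2 ^ (3:ℕ) := by positivity
    have h5 : (Real.log 2 ^ (3:ℕ))⁻¹ ≤ ((0.6931471803:ℝ)^(3:ℕ))⁻¹ :=
      inv_anti₀ (by norm_num) h3
    have h6 : ((0.6931471803:ℝ)^(3:ℕ))⁻¹ ≤ 3.003 := by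
      rw [inv_le_comm₀ (by norm_num) (by norm_num)]
      norm_num
    linarith
  by_cases h2 : 2 ∈ s
  · rw [← Finset.sum_erase_add s _ h2]
    have hrest : ∑ p ∈ s.erase 2, (p:ℝ) ^ (-2 : ℝ) * Real.log p ^ (-t) ≤ 1/9 + 1/8 := by
      apply hoddbound
      intro p hp
      exact ⟨hs p (Finset.mem_of_mem_erase hp), Finset.ne_of_mem_erase hp⟩
    calc ∑ p ∈ s.erase 2, (p:ℝ) ^ (-2 : ℝ) * Real.log p ^ (-t)
          + ((2:ℕ):ℝ) ^ (-2 : ℝ) * Real.log ((2:ℕ):ℝ) ^ (-t)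
        ≤ (1/9 + 1/8) + (1/4) * (Real.log 2 ^ (3:ℕ))⁻¹ := add_le_add hrest h2term
      _ ≤ 1 := by linarith
  · have hrest : ∑ p ∈ s, (p:ℝ) ^ (-2 : ℝ) * Real.log p ^ (-t) ≤ 1/9 + 1/8 := by
      apply hoddbound
      intro p hp
      exact ⟨hs p hp, fun h => h2 (h ▸ hp)⟩
    linarith

-- sum of log p over prime factors is at most log q
lemma sumlog (q : ℕ) (hq : 3 ≤ q) :
    ∑ p ∈ q.primeFactors, Real.log p ≤ Real.log q := by
  have hq0 : q ≠ 0 := by omega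
  have h1 : ∑ p ∈ q.primeFactors, Real.log p
      = Real.log (∏ p ∈ q.primeFactors, (p:ℝ)) := by
    rw [Real.log_prod]
    intro p hp
    have := (Nat.prime_of_mem_primeFactors hp).two_le
    positivity
  rw [h1]
  have h2 : (∏ p ∈ q.primeFactors, (p:ℝ)) = ((∏ p ∈ q.primeFactors, p : ℕ) : ℝ) := by
    push_cast; rfl
  rw [h2]
  apply Real.log_le_log
  · have : 0 < ∏ p ∈ q.primeFactors, p := by
      apply Finset.prod_pos
      intro p hp
      exact (Nat.prime_of_mem_primeFactors hp).pos
    exact_mod_cast this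
  · exact_mod_cast Nat.le_of_dvd (by omega) (Nat.prod_primeFactors_dvd q)

/-- For any integer `q ≥ 3` and real `1/2 ≤ σ ≤ 2`, one has
`∑_{p ∣ q} p^{-σ} ≤ (log q)^{(2-σ)/2}`. -/
theorem stmt_3 (q : ℕ) (hq : 3 ≤ q) (σ : ℝ) (hσ1 : 1 / 2 ≤ σ) (hσ2 : σ ≤ 2) :
    ∑ p ∈ q.primeFactors, (p : ℝ) ^ (-σ) ≤ (Real.log q) ^ ((2 - σ) / 2) := by
  have hσ0 : (0:ℝ) < σ := by linarith
  have hprimes : ∀ p ∈ q.primeFactors, Nat.Prime p := fun p hp =>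
    Nat.prime_of_mem_primeFactors hp
  have hppos : ∀ p ∈ q.primeFactors, (0:ℝ) < (p:ℝ) := by
    intro p hp
    exact_mod_cast (hprimes p hp).pos
  have hlogp : ∀ p ∈ q.primeFactors, (0:ℝ) < Real.log p := by
    intro p hp
    apply Real.log_pos
    exact_mod_cast (hprimes p hp).one_lt
  rcases eq_or_lt_of_le hσ2 with rfl | hσlt
  · -- σ = 2
    have h1 : ∑ p ∈ q.primeFactors, (p : ℝ) ^ (-(2:ℝ))
        = ∑ p ∈ q.primeFactors, (p:ℝ) ^ (-2 : ℝ) * Real.log p ^ (-(0:ℝ)) := by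
      apply Finset.sum_congr rfl
      intro p hp
      rw [neg_zero, Real.rpow_zero, mul_one]
    rw [h1, show ((2:ℝ) - 2)/2 = 0 by norm_num, Real.rpow_zero]
    exact corelem _ hprimes 0 le_rfl (by norm_num)
  · -- σ < 2
    set e : ℝ := (2 - σ) / 2 with he
    have he0 : 0 < e := by rw [he]; linarith
    have hP1 : (1:ℝ) < 2 / σ := (one_lt_div hσ0).mpr hσlt
    have hpq : Real.HolderConjugate (2 / σ) (2 / (2 - σ)) := by
      constructor
      · rw [inv_div, inv_div, inv_one]; ring
      · linarith
      · apply div_pos <;> linarith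
    set f : ℕ → ℝ := fun p => (p:ℝ) ^ (-σ) * Real.log p ^ (-e) with hf
    set g : ℕ → ℝ := fun p => Real.log p ^ e with hg
    have hfg : ∀ p ∈ q.primeFactors, (p : ℝ) ^ (-σ) = f p * g p := by
      intro p hp
      rw [hf, hg]
      simp only
      rw [mul_assoc, ← Real.rpow_add (hlogp p hp), neg_add_cancel, Real.rpow_zero, mul_one]
    rw [Finset.sum_congr rfl hfg]
    have hfnn : ∀ p ∈ q.primeFactors, 0 ≤ f p := by
      intro p hp
      exact mul_nonneg (Real.rpow_nonneg (hppos p hp).le _)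
        (Real.rpow_nonneg (hlogp p hp).le _)
    have hgnn : ∀ p ∈ q.primeFactors, 0 ≤ g p := by
      intro p hp
      exact Real.rpow_nonneg (hlogp p hp).le _
    have holder := Real.inner_le_Lp_mul_Lq_of_nonneg (s := q.primeFactors) hpq hfnn hgnn
    apply le_trans holder
    -- bound the first factor by 1
    have hfsum : ∑ p ∈ q.primeFactors, f p ^ (2/σ)
        = ∑ p ∈ q.primeFactors, (p:ℝ) ^ (-2 : ℝ) * Real.log p ^ (-((2-σ)/σ)) := by
      apply Finset.sum_congr rfl
      intro p hp
      rw [hf]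
      simp only
      rw [Real.mul_rpow (Real.rpow_nonneg (hppos p hp).le _)
        (Real.rpow_nonneg (hlogp p hp).le _),
        ← Real.rpow_mul (hppos p hp).le, ← Real.rpow_mul (hlogp p hp).le]
      have c1 : -σ * (2/σ) = -2 := by field_simp <;> ring
      have c2 : -e * (2/σ) = -((2-σ)/σ) := by rw [he]; field_simp <;> ring
      rw [c1, c2]
    have ht0 : (0:ℝ) ≤ (2-σ)/σ := div_nonneg (by linarith) hσ0.le
    have ht3 : (2-σ)/σ ≤ 3 := by
      rw [div_le_iff₀ hσ0]; linarith
    have hfP : (∑ p ∈ q.primeFactors, f p ^ (2/σ)) ^ (1/(2/σ)) ≤ 1 := by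
      refine Real.rpow_le_one ?_ ?_ (by positivity)
      · apply Finset.sum_nonneg
        intro p hp
        exact Real.rpow_nonneg (hfnn p hp) _
      · rw [hfsum]
        exact corelem _ hprimes _ ht0 ht3
    -- second factor
    have hgsum : ∑ p ∈ q.primeFactors, g p ^ (2/(2-σ))
        = ∑ p ∈ q.primeFactors, Real.log p := by
      apply Finset.sum_congr rfl
      intro p hp
      rw [hg]
      simp only
      rw [← Real.rpow_mul (hlogp p hp).le]
      have hne : (2:ℝ) - σ ≠ 0 := by linarith
      have : e * (2/(2-σ)) = 1 := by
        rw [he]; field_simp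
      rw [this, Real.rpow_one]
    have hgP : (∑ p ∈ q.primeFactors, g p ^ (2/(2-σ))) ^ (1/(2/(2-σ)))
        ≤ Real.log q ^ ((2-σ)/2) := by
      have h1 : (1:ℝ)/(2/(2-σ)) = (2-σ)/2 := by
        rw [one_div_div]
      rw [h1, hgsum]
      apply Real.rpow_le_rpow _ (sumlog q hq) (by linarith)
      apply Finset.sum_nonneg
      intro p hp
      exact (hlogp p hp).le
    have hgPnn : (0:ℝ) ≤ (∑ p ∈ q.primeFactors, g p ^ (2/(2-σ))) ^ (1/(2/(2-σ))) := by
      apply Real.rpow_nonneg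
      apply Finset.sum_nonneg
      intro p hp
      exact Real.rpow_nonneg (hgnn p hp) _
    calc (∑ p ∈ q.primeFactors, f p ^ (2/σ)) ^ (1/(2/σ)) *
          (∑ p ∈ q.primeFactors, g p ^ (2/(2-σ))) ^ (1/(2/(2-σ)))
        ≤ 1 * (Real.log q ^ ((2-σ)/2)) := by
          apply mul_le_mul hfP hgP hgPnn (by norm_num)
      _ = Real.log q ^ ((2-σ)/2) := one_mul _
end

section
/- For all real γ, real θ with 0 ≤ θ ≤ 1/4, and real β with 1/2 < β < 1, one has ∫_{-∞}^{∞} (1+|t+γ|)^{2θ} / ((1/2-β)² + t²) dt ≤ 2π (1+|γ|)^{2θ} / (β - 1/2). -/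
open MeasureTheory Set Real

/-- If `f` is integrable on `(0, ∞)`, then `x ↦ f |x|` is integrable on `ℝ`. -/
lemma aux_integrable_comp_abs {f : ℝ → ℝ} (hf : IntegrableOn f (Ioi 0)) :
    Integrable (fun x : ℝ => f |x|) := by
  have hIoi : IntegrableOn (fun x : ℝ => f |x|) (Ioi 0) := by
    refine hf.congr_fun (fun x hx => ?_) measurableSet_Ioi
    rw [abs_of_pos hx]
  have hIic : IntegrableOn (fun x : ℝ => f |x|) (Iic 0) := by
    rw [← Measure.map_neg_eq_self (volume : Measure ℝ)]
    have m : MeasurableEmbedding fun x : ℝ => -x := (Homeomorph.neg ℝ).measurableEmbedding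
    rw [m.integrableOn_map_iff]
    simp_rw [Function.comp_def, abs_neg, neg_preimage, neg_Iic, neg_zero]
    exact (integrableOn_Ici_iff_integrableOn_Ioi).mpr hIoi
  have h := hIic.union hIoi
  rwa [Iic_union_Ioi, integrableOn_univ] at h

lemma aux_bound1 {a u : ℝ} (ha : 0 < a) (hu : 0 < u) :
    (u / 2) / (a ^ 2 + u ^ 2) ≤ 1 / (4 * a) := by
  rw [div_le_div_iff₀ (by positivity) (by positivity)]
  nlinarith [sq_nonneg (a - u)]

lemma aux_arith {a : ℝ} (ha : 0 < a) (ha2 : a < 1 / 2) :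
    Real.pi / a + 1 / (2 * a) + 4 ≤ 2 * Real.pi / a := by
  have hπ : (3 : ℝ) < Real.pi := Real.pi_gt_three
  have e : 2 * Real.pi / a - (Real.pi / a + 1 / (2 * a)) = (Real.pi - 1 / 2) / a := by
    field_simp
    ring
  have h4 : (4 : ℝ) ≤ (Real.pi - 1 / 2) / a := by
    rw [le_div_iff₀ ha]
    nlinarith
  linarith

/-- For real `γ`, `0 ≤ θ ≤ 1/4`, and `1/2 < β < 1`,
`∫_{-∞}^{∞} (1+|t+γ|)^{2θ} / ((1/2-β)² + t²) dt ≤ 2π (1+|γ|)^{2θ} / (β - 1/2)`. -/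
theorem stmt_8 (γ θ β : ℝ) (hθ1 : 0 ≤ θ) (hθ2 : θ ≤ 1 / 4)
    (hβ1 : 1 / 2 < β) (hβ2 : β < 1) :
    ∫ t : ℝ, (1 + |t + γ|) ^ (2 * θ) / ((1 / 2 - β) ^ 2 + t ^ 2) ≤
      2 * Real.pi * (1 + |γ|) ^ (2 * θ) / (β - 1 / 2) := by
  set a : ℝ := β - 1 / 2 with ha_def
  have ha : 0 < a := by simp only [ha_def]; linarith
  have ha2 : a < 1 / 2 := by simp only [ha_def]; linarith
  set K : ℝ := (1 + |γ|) ^ (2 * θ) with hK_def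
  have hK0 : 0 ≤ K := Real.rpow_nonneg (by positivity) _
  have hD : ∀ t : ℝ, (1 / 2 - β) ^ 2 + t ^ 2 = a ^ 2 + t ^ 2 := by
    intro t; rw [ha_def]; ring
  clear_value a K
  set F2 : ℝ → ℝ := fun u => min (u / 2) (Real.sqrt u) / (a ^ 2 + u ^ 2) with hF2_def
  have hF2cont : Continuous F2 := by
    refine Continuous.div ?_ (by continuity) (fun u => by positivity)
    exact (continuous_id.div_const 2).min Real.continuous_sqrt
  -- integrability on (0,1]
  have hI1 : IntegrableOn F2 (Ioc 0 1) :=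
    (hF2cont.integrableOn_Icc (a := 0) (b := 1)).mono_set Ioc_subset_Icc_self
  -- tail bound
  have hrpowInt : IntegrableOn (fun u : ℝ => u ^ (-(3 : ℝ) / 2)) (Ioi 1) :=
    integrableOn_Ioi_rpow_of_lt (by norm_num) one_pos
  have hF2nonneg : ∀ u : ℝ, 0 ≤ u → 0 ≤ F2 u := by
    intro u hu
    have : 0 ≤ min (u / 2) (Real.sqrt u) := le_min (by linarith) (Real.sqrt_nonneg u)
    positivity
  have hF2leTail : ∀ u ∈ Ioi (1 : ℝ), F2 u ≤ u ^ (-(3 : ℝ) / 2) := by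
    intro u hu
    have hu1 : (1 : ℝ) < u := hu
    have hu0 : (0 : ℝ) < u := by linarith
    have hval : u ^ (-(3 : ℝ) / 2) = Real.sqrt u / u ^ 2 := by
      rw [Real.sqrt_eq_rpow, eq_div_iff (by positivity), ← Real.rpow_natCast u 2,
        ← Real.rpow_add hu0]
      norm_num
    rw [hval]
    refine div_le_div₀ (Real.sqrt_nonneg u) (min_le_right _ _) (by positivity) ?_
    nlinarith [sq_nonneg a]
  have hI2 : IntegrableOn F2 (Ioi 1) := by
    refine Integrable.mono' hrpowInt (hF2cont.aestronglyMeasurable.restrict) ?_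
    filter_upwards [ae_restrict_mem measurableSet_Ioi] with u hu
    rw [Real.norm_eq_abs, abs_of_nonneg (hF2nonneg u (by exact le_of_lt (lt_trans one_pos hu)))]
    exact hF2leTail u hu
  have hIoi0 : IntegrableOn F2 (Ioi 0) := by
    have h := hI1.union hI2
    rwa [Ioc_union_Ioi_eq_Ioi (by norm_num : (0 : ℝ) ≤ 1)] at h
  have hg2int : Integrable (fun t : ℝ => F2 |t|) := aux_integrable_comp_abs hIoi0
  -- the kernel
  have hkereq : ∀ t : ℝ, (a ^ 2)⁻¹ * (1 + (t / a) ^ 2)⁻¹ = (a ^ 2 + t ^ 2)⁻¹ := by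
    intro t
    have h1 : (1 + (t / a) ^ 2) = (a ^ 2 + t ^ 2) / a ^ 2 := by
      field_simp
    rw [h1]
    field_simp
  have hker : Integrable (fun t : ℝ => (a ^ 2 + t ^ 2)⁻¹) := by
    have h0 := (integrable_inv_one_add_sq.comp_div (R := a) ha.ne').const_mul ((a ^ 2)⁻¹)
    exact h0.congr (ae_of_all _ fun t => hkereq t)
  have hkerval : ∫ t : ℝ, (a ^ 2 + t ^ 2)⁻¹ = π / a := by
    have h1 : ∫ t : ℝ, (a ^ 2)⁻¹ * (1 + (t / a) ^ 2)⁻¹ = (a ^ 2)⁻¹ * (a * π) := by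
      rw [integral_const_mul,
        Measure.integral_comp_div (fun y : ℝ => (1 + y ^ 2)⁻¹) a,
        integral_univ_inv_one_add_sq, smul_eq_mul, abs_of_pos ha]
    have h2 : ∫ t : ℝ, (a ^ 2 + t ^ 2)⁻¹ = ∫ t : ℝ, (a ^ 2)⁻¹ * (1 + (t / a) ^ 2)⁻¹ := by
      congr 1; funext t; rw [hkereq t]
    rw [h2, h1]
    field_simp
  -- the majorant
  set G : ℝ → ℝ := fun t => K * ((a ^ 2 + t ^ 2)⁻¹ + F2 |t|) with hG_def
  have hGint : Integrable G := (hker.add hg2int).const_mul K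
  -- pointwise bound
  have hfpt : ∀ t : ℝ,
      (1 + |t + γ|) ^ (2 * θ) / ((1 / 2 - β) ^ 2 + t ^ 2) ≤ G t := by
    intro t
    have habs : (0 : ℝ) ≤ |t| := abs_nonneg t
    have hGeq : G t = K * (1 + min (|t| / 2) (Real.sqrt |t|)) / (a ^ 2 + t ^ 2) := by
      simp only [hG_def, hF2_def, sq_abs]
      ring
    rw [hD t, hGeq]
    have hDpos : (0 : ℝ) < a ^ 2 + t ^ 2 := by positivity
    rw [div_le_div_iff_of_pos_right hDpos]
    -- numerator bound
    have hn1 : (1 + |t + γ|) ^ (2 * θ) ≤ ((1 + |γ|) * (1 + |t|)) ^ (2 * θ) := by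
      refine Real.rpow_le_rpow (by positivity) ?_ (by linarith)
      have := abs_add_le t γ
      nlinarith [abs_nonneg t, abs_nonneg γ, mul_nonneg (abs_nonneg γ) (abs_nonneg t)]
    have hn2 : ((1 + |γ|) * (1 + |t|)) ^ (2 * θ) = K * (1 + |t|) ^ (2 * θ) := by
      rw [hK_def, ← Real.mul_rpow (by positivity) (by positivity)]
    have hn3 : (1 + |t|) ^ (2 * θ) ≤ (1 + |t|) ^ ((1 : ℝ) / 2) :=
      Real.rpow_le_rpow_of_exponent_le (by linarith) (by linarith)
    have hn4 : (1 + |t|) ^ ((1 : ℝ) / 2) = Real.sqrt (1 + |t|) := by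
      rw [Real.sqrt_eq_rpow]
    have hn5 : Real.sqrt (1 + |t|) ≤ 1 + min (|t| / 2) (Real.sqrt |t|) := by
      have h51 : Real.sqrt (1 + |t|) ≤ 1 + |t| / 2 := by
        have : Real.sqrt (1 + |t|) ≤ Real.sqrt ((1 + |t| / 2) ^ 2) :=
          Real.sqrt_le_sqrt (by nlinarith)
        rwa [Real.sqrt_sq (by linarith)] at this
      have h52 : Real.sqrt (1 + |t|) ≤ 1 + Real.sqrt |t| := by
        have : Real.sqrt (1 + |t|) ≤ Real.sqrt ((1 + Real.sqrt |t|) ^ 2) := by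
          refine Real.sqrt_le_sqrt ?_
          nlinarith [Real.sq_sqrt habs, Real.sqrt_nonneg |t|]
        rwa [Real.sqrt_sq (by positivity)] at this
      rcases le_total (|t| / 2) (Real.sqrt |t|) with h | h
      · rw [min_eq_left h]; exact h51
      · rw [min_eq_right h]; exact h52
    calc (1 + |t + γ|) ^ (2 * θ) ≤ K * (1 + |t|) ^ (2 * θ) := by rw [← hn2]; exact hn1
      _ ≤ K * Real.sqrt (1 + |t|) := by
          rw [← hn4]; exact mul_le_mul_of_nonneg_left hn3 hK0
      _ ≤ K * (1 + min (|t| / 2) (Real.sqrt |t|)) := mul_le_mul_of_nonneg_left hn5 hK0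
  -- integrability of the integrand
  have hfcont : Continuous fun t : ℝ =>
      (1 + |t + γ|) ^ (2 * θ) / ((1 / 2 - β) ^ 2 + t ^ 2) := by
    have hb2 : ∀ t : ℝ, 0 < (1 / 2 - β) ^ 2 + t ^ 2 := fun t => by
      rw [hD t]; positivity
    refine Continuous.div ?_ (continuous_const.add (continuous_pow 2))
      (fun t => (hb2 t).ne')
    exact (continuous_const.add ((continuous_id.add continuous_const).abs)).rpow_const
      (fun x => Or.inr (by linarith))
  have hfint : Integrable fun t : ℝ =>
      (1 + |t + γ|) ^ (2 * θ) / ((1 / 2 - β) ^ 2 + t ^ 2) := by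
    refine hGint.mono' hfcont.aestronglyMeasurable (ae_of_all _ fun t => ?_)
    rw [Real.norm_eq_abs, abs_of_nonneg (by positivity)]
    exact hfpt t
  have key : (∫ t : ℝ, (1 + |t + γ|) ^ (2 * θ) / ((1 / 2 - β) ^ 2 + t ^ 2)) ≤ ∫ t : ℝ, G t :=
    integral_mono hfint hGint hfpt
  -- compute the integral of G
  have hGval : ∫ t : ℝ, G t = K * (π / a + 2 * ∫ u in Ioi (0 : ℝ), F2 u) := by
    calc ∫ t : ℝ, G t = K * ∫ t : ℝ, ((a ^ 2 + t ^ 2)⁻¹ + F2 |t|) := by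
          rw [hG_def]; exact integral_const_mul K _
      _ = K * (π / a + 2 * ∫ u in Ioi (0 : ℝ), F2 u) := by
          rw [integral_add hker hg2int, hkerval, integral_comp_abs]
  have hsplit : ∫ u in Ioi (0 : ℝ), F2 u =
      (∫ u in Ioc (0 : ℝ) 1, F2 u) + ∫ u in Ioi (1 : ℝ), F2 u := by
    rw [← setIntegral_union (Ioc_disjoint_Ioi le_rfl) measurableSet_Ioi hI1 hI2,
      Ioc_union_Ioi_eq_Ioi (by norm_num : (0 : ℝ) ≤ 1)]
  have hpiece1 : ∫ u in Ioc (0 : ℝ) 1, F2 u ≤ 1 / (4 * a) := by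
    have hconst : IntegrableOn (fun _ : ℝ => 1 / (4 * a)) (Ioc 0 1) :=
      integrableOn_const measure_Ioc_lt_top.ne
    have hmono := setIntegral_mono_on hI1 hconst measurableSet_Ioc (fun u hu => ?_)
    · calc ∫ u in Ioc (0 : ℝ) 1, F2 u ≤ ∫ _ in Ioc (0 : ℝ) 1, 1 / (4 * a) := hmono
        _ = 1 / (4 * a) := by simp [Real.volume_Ioc]
    · obtain ⟨hu0, hu1⟩ := hu
      have hstep1 : F2 u ≤ (u / 2) / (a ^ 2 + u ^ 2) := by
        simp only [hF2_def]
        gcongr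
        exact min_le_left _ _
      exact hstep1.trans (aux_bound1 ha hu0)
  have hpiece2 : ∫ u in Ioi (1 : ℝ), F2 u ≤ 2 := by
    calc ∫ u in Ioi (1 : ℝ), F2 u ≤ ∫ u in Ioi (1 : ℝ), u ^ (-(3 : ℝ) / 2) :=
          setIntegral_mono_on hI2 hrpowInt measurableSet_Ioi hF2leTail
      _ = 2 := by
          rw [integral_Ioi_rpow_of_lt (by norm_num) one_pos]
          norm_num
  -- final arithmetic
  have hfin : K * (π / a + 2 * ∫ u in Ioi (0 : ℝ), F2 u) ≤ 2 * π * K / a := by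
    have hint_le : (∫ u in Ioi (0 : ℝ), F2 u) ≤ 1 / (4 * a) + 2 := by
      rw [hsplit]; linarith
    have hπ : (3 : ℝ) < π := Real.pi_gt_three
    have h24 : 2 * (1 / (4 * a)) = 1 / (2 * a) := by
      field_simp
      ring
    have h1 : π / a + 2 * ∫ u in Ioi (0 : ℝ), F2 u ≤ π / a + 1 / (2 * a) + 4 := by
      linarith
    have h2 : π / a + 1 / (2 * a) + 4 ≤ 2 * π / a := aux_arith ha ha2
    calc K * (π / a + 2 * ∫ u in Ioi (0 : ℝ), F2 u) ≤ K * (2 * π / a) := by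
          exact mul_le_mul_of_nonneg_left (h1.trans h2) hK0
      _ = 2 * π * K / a := by ring
  calc (∫ t : ℝ, (1 + |t + γ|) ^ (2 * θ) / ((1 / 2 - β) ^ 2 + t ^ 2)) ≤ ∫ t : ℝ, G t := key
    _ = K * (π / a + 2 * ∫ u in Ioi (0 : ℝ), F2 u) := hGval
    _ ≤ 2 * π * K / a := hfin
end
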